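/- arXiv:1604.00596 — 8 statements merged into one kernel-verified Lean document; each statement's English description precedes it below -/
import Mathlib

section
/- For a right-continuous function f : [0,1] → ℝ with left limits (càdlàg) and t ∈ (0,1], the quantity var(f, t−) := inf_{t' ∈ [0,t)} var(f|[t',t]) takes values only in the two-element set {|Δf(t)|, ∞}, where Δf(t) = f(t) − f(t−). -/
open Set Filter ENNReal

private lemma varLeft_sum_bound (f : ℝ → ℝ) {a t : ℝ} (L d ε : ℝ) (hd : 0 ≤ d) (hε : 0 ≤ ε)
    (hvar : ∀ s ∈ Set.Ico a t, eVariationOn f (Set.Icc a s) ≤ ENNReal.ofReal ε)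
    (hnear : ∀ s ∈ Set.Ico a t, |f s - L| ≤ ε)
    (hjump : |f t - L| ≤ d) :
    eVariationOn f (Set.Icc a t) ≤ ENNReal.ofReal (d + 2 * ε) := by
  apply iSup_le
  rintro ⟨n, u, hu, us⟩
  dsimp only
  rcases eq_or_lt_of_le (us n).2 with hn | hn
  · -- u n = t
    have hex : ∃ i, u i = t := ⟨n, hn⟩
    set k := Nat.find hex with hkdef
    have hk : u k = t := Nat.find_spec hex
    have hkn : k ≤ n := Nat.find_min' hex hn
    have hup : ∀ i, k ≤ i → u i = t := fun i hi => le_antisymm (us i).2 (hk ▸ hu hi)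
    have hlt : ∀ i < k, u i < t := fun i hi => lt_of_le_of_ne (us i).2 (Nat.find_min hex hi)
    have hsum : ∑ i ∈ Finset.range n, edist (f (u (i + 1))) (f (u i))
        = ∑ i ∈ Finset.range k, edist (f (u (i + 1))) (f (u i)) := by
      rw [← Finset.sum_range_add_sum_Ico _ hkn]
      have : ∑ i ∈ Finset.Ico k n, edist (f (u (i + 1))) (f (u i)) = 0 := by
        apply Finset.sum_eq_zero
        intro i hi
        rw [Finset.mem_Ico] at hi
        rw [hup i hi.1, hup (i + 1) (hi.1.trans i.le_succ), edist_self]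
      rw [this, add_zero]
    rw [hsum]
    rcases Nat.eq_zero_or_eq_succ_pred k with hk0 | hk0
    · rw [hk0]; simp
    · set m := k - 1 with hmdef
      rw [hk0, Finset.sum_range_succ]
      have hmk : m < k := by omega
      have hum : u m < t := hlt m hmk
      have h1 : ∑ i ∈ Finset.range m, edist (f (u (i + 1))) (f (u i))
          ≤ ENNReal.ofReal ε := by
        refine le_trans ?_ (hvar (u m) ⟨(us m).1, hum⟩)
        apply eVariationOn.sum_le_of_monotoneOn_Iic (f := f) (hu.monotoneOn _)
        intro i hi
        exact ⟨(us i).1, hu hi⟩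
      have h2 : edist (f (u (m + 1))) (f (u m)) ≤ ENNReal.ofReal d + ENNReal.ofReal ε := by
        have hum1 : u (m + 1) = t := hup (m + 1) (by omega)
        calc edist (f (u (m + 1))) (f (u m)) ≤ edist (f (u (m + 1))) L + edist L (f (u m)) :=
              edist_triangle _ _ _
          _ ≤ ENNReal.ofReal d + ENNReal.ofReal ε := by
              gcongr
              · rw [hum1, edist_dist, Real.dist_eq]
                exact ENNReal.ofReal_le_ofReal hjump
              · rw [edist_dist, Real.dist_eq, abs_sub_comm]
                exact ENNReal.ofReal_le_ofReal (hnear (u m) ⟨(us m).1, hum⟩)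
      calc _ ≤ ENNReal.ofReal ε + (ENNReal.ofReal d + ENNReal.ofReal ε) := add_le_add h1 h2
        _ = ENNReal.ofReal (d + 2 * ε) := by
            rw [← ENNReal.ofReal_add hd hε, ← ENNReal.ofReal_add hε (by linarith)]
            ring_nf
  · -- u n < t
    have key : ∀ i ≤ n, u i ∈ Set.Icc a (u n) := fun i hi => ⟨(us i).1, hu hi⟩
    calc ∑ i ∈ Finset.range n, edist (f (u (i + 1))) (f (u i))
        ≤ eVariationOn f (Set.Icc a (u n)) :=
          eVariationOn.sum_le_of_monotoneOn_Iic (f := f) (hu.monotoneOn _) key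
      _ ≤ ENNReal.ofReal ε := hvar (u n) ⟨(us n).1, hn⟩
      _ ≤ ENNReal.ofReal (d + 2 * ε) := ENNReal.ofReal_le_ofReal (by linarith)

/-- For a càdlàg `f` and `t ∈ (0,1]`, `var(f, t−)` takes only the values `|Δf(t)|` and `∞`. -/
theorem varLeft_mem_pair (f : ℝ → ℝ) (t : ℝ) (ht : t ∈ Set.Ioc (0:ℝ) 1)
    (hright : ∀ s ∈ Set.Ico (0:ℝ) 1, Filter.Tendsto f (nhdsWithin s (Set.Ici s)) (nhds (f s)))
    (L : ℝ)
    (hleft : Filter.Tendsto f (nhdsWithin t (Set.Ico 0 t)) (nhds L))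
    (hleftlim : ∀ s ∈ Set.Ioc (0:ℝ) 1, ∃ M : ℝ,
      Filter.Tendsto f (nhdsWithin s (Set.Ico 0 s)) (nhds M)) :
    (⨅ t' : Set.Ico (0:ℝ) t, eVariationOn f (Set.Icc t'.1 t)) ∈
      ({ENNReal.ofReal |f t - L|, ⊤} : Set ENNReal) := by
  have h0t : (0:ℝ) < t := ht.1
  set A := ⨅ t' : Set.Ico (0:ℝ) t, eVariationOn f (Set.Icc t'.1 t) with hA
  have hnhds : nhdsWithin t (Set.Ico 0 t) = nhdsWithin t (Set.Iio t) :=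
    nhdsWithin_Ico_eq_nhdsLT h0t
  by_cases htop : A = ⊤
  · exact Or.inr htop
  left
  -- lower bound
  have hlb : ENNReal.ofReal |f t - L| ≤ A := by
    apply le_iInf
    rintro ⟨t', ht'⟩
    have hne : (nhdsWithin t (Set.Ico 0 t)).NeBot := by
      rw [hnhds]; exact nhdsLT_neBot t
    have htend : Filter.Tendsto (fun s => edist (f s) (f t)) (nhdsWithin t (Set.Ico 0 t))
        (nhds (edist L (f t))) :=
      ((continuous_id.edist continuous_const).tendsto L).comp hleft
    have hev : ∀ᶠ s in nhdsWithin t (Set.Ico 0 t),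
        edist (f s) (f t) ≤ eVariationOn f (Set.Icc t' t) := by
      have : Set.Ioi t' ∈ nhdsWithin t (Set.Ico 0 t) :=
        nhdsWithin_le_nhds (Ioi_mem_nhds ht'.2)
      filter_upwards [this, self_mem_nhdsWithin] with s hs1 hs2
      exact eVariationOn.edist_le f ⟨le_of_lt hs1, hs2.2.le⟩ ⟨ht'.2.le, le_rfl⟩
    have := le_of_tendsto htend hev
    rwa [edist_dist, Real.dist_eq, abs_sub_comm] at this
  -- upper bound
  have hub : A ≤ ENNReal.ofReal |f t - L| := by
    apply ENNReal.le_of_forall_pos_le_add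
    intro ε hε _
    set δ : ℝ := (ε : ℝ) / 3 with hδdef
    have hδ : 0 < δ := by positivity
    -- find t₀ with variation close to A
    have hlt : A < A + ENNReal.ofReal δ :=
      ENNReal.lt_add_right htop (ENNReal.ofReal_pos.2 hδ).ne'
    obtain ⟨⟨t₀, ht₀⟩, ht₀v⟩ := iInf_lt_iff.1 (hA ▸ hlt)
    -- find l controlling |f s - L|
    have hmem : {s : ℝ | |f s - L| ≤ δ} ∈ nhdsWithin t (Set.Ico 0 t) := by
      have : {s : ℝ | dist (f s) L < δ} ∈ nhdsWithin t (Set.Ico 0 t) :=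
        hleft (Metric.ball_mem_nhds L hδ)
      filter_upwards [this] with s hs
      exact le_of_lt (by rwa [Real.dist_eq] at hs)
    rw [hnhds, mem_nhdsLT_iff_exists_Ico_subset] at hmem
    obtain ⟨l, hl, hlsub⟩ := hmem
    set a : ℝ := max t₀ l with hadef
    have hat : a < t := max_lt ht₀.2 hl
    have ha0 : (0:ℝ) ≤ a := le_trans ht₀.1 (le_max_left _ _)
    -- variation bound on [a, s] for s < t
    have hvar : ∀ s ∈ Set.Ico a t, eVariationOn f (Set.Icc a s) ≤ ENNReal.ofReal δ := by
      intro s hs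
      have hts : t₀ ≤ s := le_trans (le_max_left _ _) hs.1
      have hadd : eVariationOn f (Set.Icc t₀ s) + eVariationOn f (Set.Icc s t)
          = eVariationOn f (Set.Icc t₀ t) := by
        have := eVariationOn.Icc_add_Icc f (s := Set.univ) hts hs.2.le (Set.mem_univ s)
        simpa using this
      have hAle : A ≤ eVariationOn f (Set.Icc s t) :=
        iInf_le _ (⟨s, le_trans ha0 hs.1, hs.2⟩ : Set.Ico (0:ℝ) t)
      have h1 : eVariationOn f (Set.Icc t₀ s) + A < A + ENNReal.ofReal δ :=
        lt_of_le_of_lt (by rw [← hadd] at ht₀v ⊢; exact add_le_add le_rfl hAle) ht₀v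
      rw [add_comm A (ENNReal.ofReal δ)] at h1
      have h2 : eVariationOn f (Set.Icc t₀ s) < ENNReal.ofReal δ :=
        (ENNReal.add_lt_add_iff_right htop).1 h1
      exact le_trans (eVariationOn.mono f (Set.Icc_subset_Icc_left (le_max_left _ _))) h2.le
    have hnear : ∀ s ∈ Set.Ico a t, |f s - L| ≤ δ := fun s hs =>
      hlsub ⟨le_trans (le_max_right _ _) hs.1, hs.2⟩
    have hbound := varLeft_sum_bound f L |f t - L| δ (abs_nonneg _) hδ.le hvar hnear le_rfl
    have hAle : A ≤ eVariationOn f (Set.Icc a t) :=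
      iInf_le _ (⟨a, ha0, hat⟩ : Set.Ico (0:ℝ) t)
    calc A ≤ ENNReal.ofReal (|f t - L| + 2 * δ) := le_trans hAle hbound
      _ ≤ ENNReal.ofReal |f t - L| + ENNReal.ofReal (2 * δ) := ENNReal.ofReal_add_le
      _ ≤ ENNReal.ofReal |f t - L| + ε := by
          gcongr
          rw [← ENNReal.ofReal_coe_nnreal]
          apply ENNReal.ofReal_le_ofReal
          rw [hδdef]
          have : (0:ℝ) ≤ ε := ε.2
          linarith
  exact le_antisymm hub hlb
end

section
/- For f : [0,1] → ℝ and t ∈ [0,1), the quantity var(f, t+) := inf_{t' ∈ (t,1]} var(f|[t,t']) takes values only in the two-element set {0, ∞}, provided f is right-continuous at t. -/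
open Set ENNReal

private lemma key_var {f : ℝ → ℝ} {t t' : ℝ} {ε : ℝ≥0∞}
    (hε : ∀ x ∈ Set.Icc t t', edist (f x) (f t) ≤ ε) :
    eVariationOn f (Set.Icc t t') ≤
      ε + ⨆ c : Set.Ioc t t', eVariationOn f (Set.Icc c.1 t') := by
  unfold eVariationOn
  refine iSup_le ?_
  rintro ⟨n, ⟨u, hu, hus⟩⟩
  dsimp only
  by_cases hex : ∃ i, t < u i
  · obtain ⟨k, hk, hlt⟩ : ∃ k, t < u k ∧ ∀ j < k, u j = t :=
      ⟨Nat.find hex, Nat.find_spec hex, fun j hj =>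
        le_antisymm (not_lt.1 (Nat.find_min hex hj)) (hus j).1⟩
    by_cases hkn : k ≤ n
    · have hsplit : ∑ i ∈ Finset.range n, edist (f (u (i + 1))) (f (u i)) =
          (∑ i ∈ Finset.range k, edist (f (u (i + 1))) (f (u i))) +
            ∑ i ∈ Finset.Ico k n, edist (f (u (i + 1))) (f (u i)) := by
        rw [Finset.range_eq_Ico, Finset.range_eq_Ico,
          Finset.sum_Ico_consecutive _ (Nat.zero_le k) hkn]
      rw [hsplit]
      have hhead : (∑ i ∈ Finset.range k, edist (f (u (i + 1))) (f (u i))) ≤ ε := by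
        cases k with
        | zero => simp
        | succ m =>
          rw [Finset.sum_range_succ]
          have h0 : ∀ i ∈ Finset.range m, edist (f (u (i + 1))) (f (u i)) = 0 := by
            intro i hi
            rw [Finset.mem_range] at hi
            rw [hlt i (by omega), hlt (i + 1) (by omega)]
            simp
          rw [Finset.sum_congr rfl h0, Finset.sum_const_zero, zero_add,
            hlt m (by omega)]
          exact hε _ (hus (m + 1))
      have htail : (∑ i ∈ Finset.Ico k n, edist (f (u (i + 1))) (f (u i))) ≤
          eVariationOn f (Set.Icc (u k) t') := by
        rw [Finset.sum_Ico_eq_sum_range]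
        exact eVariationOn.sum_le (f := f) (n := n - k)
          (u := fun j => u (k + j)) (fun i j hij => hu (by omega))
          (fun j => ⟨hu (by omega), (hus (k + j)).2⟩)
      refine add_le_add hhead (htail.trans ?_)
      exact le_iSup (fun c : Set.Ioc t t' => eVariationOn f (Set.Icc c.1 t'))
        ⟨u k, hk, (hus k).2⟩
    · have h0 : ∀ i ∈ Finset.range n, edist (f (u (i + 1))) (f (u i)) = 0 := by
        intro i hi
        rw [Finset.mem_range] at hi
        rw [hlt i (by omega), hlt (i + 1) (by omega)]
        simp
      rw [Finset.sum_congr rfl h0, Finset.sum_const_zero]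
      exact zero_le
  · push_neg at hex
    have h0 : ∀ i, u i = t := fun i => le_antisymm (hex i) (hus i).1
    simp [h0]

/-- For `f` right-continuous at `t ∈ [0,1)`, `var(f, t+)` takes only the values `0` and `⊤`. -/
theorem varRight_mem_pair (f : ℝ → ℝ) (t : ℝ) (ht : t ∈ Set.Ico (0:ℝ) 1)
    (hright : Filter.Tendsto f (nhdsWithin t (Set.Ici t)) (nhds (f t))) :
    (⨅ t' : Set.Ioc t 1, eVariationOn f (Set.Icc t t'.1)) ∈
      ({0, ⊤} : Set ENNReal) := by
  set L := ⨅ t' : Set.Ioc t 1, eVariationOn f (Set.Icc t t'.1) with hL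
  by_contra hcon
  simp only [Set.mem_insert_iff, Set.mem_singleton_iff, not_or] at hcon
  obtain ⟨hL0, hLtop⟩ := hcon
  have hLpos : 0 < L := pos_iff_ne_zero.2 hL0
  have ht1 : t < 1 := ht.2
  -- there is some s with finite variation
  have : ∃ s : Set.Ioc t 1, eVariationOn f (Set.Icc t s.1) ≠ ⊤ := by
    by_contra h
    push_neg at h
    apply hLtop
    rw [hL]
    have : Nonempty (Set.Ioc t 1) := ⟨⟨1, ht1, le_rfl⟩⟩
    simp [iInf_eq_top.2 fun s => h s]
  obtain ⟨⟨s, hs⟩, hsfin⟩ := this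
  obtain ⟨ε, hε0, hεL⟩ : ∃ ε, 0 < ε ∧ ε < L := exists_between hLpos
  -- right continuity gives a δ
  have hev : ∀ᶠ x in nhdsWithin t (Set.Ici t), edist (f x) (f t) < ε := by
    have := EMetric.tendsto_nhds.1 hright ε hε0
    exact this
  rw [Filter.eventually_iff, Metric.mem_nhdsWithin_iff] at hev
  obtain ⟨δ, hδ0, hδ⟩ := hev
  set t' : ℝ := min (t + δ / 2) s with ht'def
  have htt' : t < t' := lt_min (by linarith) hs.1
  have ht'1 : t' ≤ 1 := le_trans (min_le_right _ _) hs.2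
  have ht'mem : t' ∈ Set.Ioc t 1 := ⟨htt', ht'1⟩
  set V := eVariationOn f (Set.Icc t t') with hV
  have hVfin : V ≠ ⊤ := by
    intro h
    exact hsfin (eq_top_mono (eVariationOn.mono f
      (Set.Icc_subset_Icc le_rfl (min_le_right _ _))) h)
  have hLV : L ≤ V := iInf_le _ (⟨t', ht'mem⟩ : Set.Ioc t 1)
  -- the edist bound on [t, t']
  have hεbound : ∀ x ∈ Set.Icc t t', edist (f x) (f t) ≤ ε := by
    intro x hx
    have hxd : x ≤ t + δ / 2 := le_trans hx.2 (min_le_left _ _)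
    refine le_of_lt (hδ ⟨?_, hx.1⟩)
    rw [Metric.mem_ball, Real.dist_eq, abs_of_nonneg (by linarith [hx.1])]
    linarith
  have hkey := key_var hεbound
  -- bound the sup by V - L
  have hsup : (⨆ c : Set.Ioc t t', eVariationOn f (Set.Icc c.1 t')) ≤ V - L := by
    refine iSup_le ?_
    rintro ⟨c, hc1, hc2⟩
    have hcmem : c ∈ Set.Icc t t' := ⟨le_of_lt hc1, hc2⟩
    have hadd : eVariationOn f (Set.Icc t c) + eVariationOn f (Set.Icc c t') = V := by
      have := eVariationOn.Icc_add_Icc f (s := Set.univ) (le_of_lt hc1) hc2 (Set.mem_univ c)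
      simpa using this
    have hLc : L ≤ eVariationOn f (Set.Icc t c) :=
      iInf_le _ (⟨c, hc1, le_trans hc2 ht'1⟩ : Set.Ioc t 1)
    have : L + eVariationOn f (Set.Icc c t') ≤ V := by
      rw [← hadd]; exact add_le_add_left hLc _
    exact (ENNReal.cancel_of_ne hLtop).le_tsub_of_add_le_left this
  have hVle : V ≤ ε + (V - L) := le_trans hkey (add_le_add_right hsup ε)
  have hcancel : V + L ≤ V + ε := by
    calc V + L ≤ ε + (V - L) + L := add_le_add_left hVle L
    _ = ε + V := by rw [add_assoc, tsub_add_cancel_of_le hLV]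
    _ = V + ε := add_comm _ _
  have hLε : L ≤ ε := (ENNReal.add_le_add_iff_left hVfin).1 hcancel
  exact absurd hLε (not_le.2 hεL)
end

section
/- Let Ω be a set, ≼ a well-order on Ω, and for a function ω ∈ Ω of type [0,1] → ℝ and a ∈ [0,1], let ω^a denote the ≼-least element ω' of Ω with ω'|[0,a] = ω|[0,a]. Then the set W_ω := {t ∈ [0,1] : for all t' ∈ (t,1], ω^{t'} ≠ ω^t} is well-ordered by ≤. -/
/-- The set `W_ω` of times after which the Ockham prediction changes is well-ordered by `≤`. -/
theorem ockham_W_isWF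
    (Ω : Set (ℝ → ℝ)) (r : Ω → Ω → Prop) (hr : IsWellOrder Ω r)
    (ω : Ω) (pred : ℝ → Ω)
    (hagree : ∀ a ∈ Set.Icc (0:ℝ) 1,
      Set.EqOn ((pred a : ℝ → ℝ)) (ω : ℝ → ℝ) (Set.Icc 0 a))
    (hleast : ∀ a ∈ Set.Icc (0:ℝ) 1, ∀ ω' : Ω,
      Set.EqOn (ω' : ℝ → ℝ) (ω : ℝ → ℝ) (Set.Icc 0 a) → ¬ r ω' (pred a)) :
    Set.IsWF {t | t ∈ Set.Icc (0:ℝ) 1 ∧ ∀ t' ∈ Set.Ioc t 1, pred t' ≠ pred t} := by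
  set W := {t | t ∈ Set.Icc (0:ℝ) 1 ∧ ∀ t' ∈ Set.Ioc t 1, pred t' ≠ pred t} with hW
  -- key monotonicity: for s < t both in W, r (pred s) (pred t)
  have key : ∀ s ∈ W, ∀ t ∈ W, s < t → r (pred s) (pred t) := by
    intro s hs t ht hst
    have hsI : s ∈ Set.Icc (0:ℝ) 1 := hs.1
    have htI : t ∈ Set.Icc (0:ℝ) 1 := ht.1
    have hsub : Set.Icc (0:ℝ) s ⊆ Set.Icc (0:ℝ) t :=
      Set.Icc_subset_Icc le_rfl hst.le
    have hnot : ¬ r (pred t) (pred s) :=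
      hleast s hsI (pred t) (fun x hx => hagree t htI (hsub hx))
    have hne : pred t ≠ pred s := hs.2 t ⟨hst, htI.2⟩
    rcases (show r (pred s) (pred t) ∨ pred s = pred t ∨ r (pred t) (pred s) from Classical.byCases (fun h1 => Or.inl h1) fun h1 => Classical.byCases (fun h2 => Or.inr (Or.inr h2)) fun h2 => Or.inr (Or.inl (hr.trichotomous (pred s) (pred t) h1 h2))) with h | h | h
    · exact h
    · exact absurd h.symm hne
    · exact absurd h hnot
  rw [Set.isWF_iff_no_descending_seq]
  intro f hf hmem
  have hdesc : ∀ n : ℕ, r (pred (f (n + 1))) (pred (f n)) := fun n =>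
    key (f (n + 1)) (hmem (n + 1)) (f n) (hmem n) (hf (Nat.lt_succ_self n))
  have wf : WellFounded r := hr.wf
  obtain ⟨m, ⟨n, hn⟩, hmin⟩ := wf.has_min (Set.range fun n => pred (f n))
    ⟨pred (f 0), ⟨0, rfl⟩⟩
  exact hmin _ ⟨n + 1, rfl⟩ (hn ▸ hdesc n)
end

section
/- Let Ω be a set of functions [0,1] → ℝ, ≼ a well-order on Ω, and for ω ∈ Ω and a ∈ [0,1] let ω^a be the ≼-least element of Ω agreeing with ω on [0,a]. Then for every t ∈ [0,1) there exists t' > t such that the map s ↦ ω^s is constant on (t, t'); consequently ω^s agrees with ω on [0, s] for all s ∈ (t, t'), hence ω^s|[t,t'] agrees with ω on [t, s] for each such s. -/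
/-- For every `t ∈ [0,1)` there is `t' > t` such that `s ↦ ω^s` is constant on `(t,t')`;
consequently each such prediction agrees with `ω` on `[0,s]`, hence on `[t,s]`. -/
theorem ockham_eventually_constant
    (Ω : Set (ℝ → ℝ)) (r : Ω → Ω → Prop) (hr : IsWellOrder Ω r)
    (ω : Ω) (pred : ℝ → Ω)
    (hagree : ∀ a ∈ Set.Icc (0:ℝ) 1,
      Set.EqOn ((pred a : ℝ → ℝ)) (ω : ℝ → ℝ) (Set.Icc 0 a))
    (hleast : ∀ a ∈ Set.Icc (0:ℝ) 1, ∀ ω' : Ω,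
      Set.EqOn (ω' : ℝ → ℝ) (ω : ℝ → ℝ) (Set.Icc 0 a) → ¬ r ω' (pred a))
    (t : ℝ) (ht : t ∈ Set.Ico (0:ℝ) 1) :
    ∃ t' ∈ Set.Ioc t 1,
      (∀ s ∈ Set.Ioo t t', ∀ s'' ∈ Set.Ioo t t', pred s = pred s'') ∧
      (∀ s ∈ Set.Ioo t t',
        Set.EqOn ((pred s : ℝ → ℝ)) (ω : ℝ → ℝ) (Set.Icc 0 s) ∧
        Set.EqOn ((pred s : ℝ → ℝ)) (ω : ℝ → ℝ) (Set.Icc t s)) := by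
  obtain ⟨ht0, ht1⟩ := ht
  -- monotonicity: if t < s ≤ s' ≤ 1 then ¬ r (pred s') (pred s)
  have mono : ∀ s s' : ℝ, t < s → s ≤ s' → s' ≤ 1 → ¬ r (pred s') (pred s) := by
    intro s s' hts hss' hs1
    have hs0 : (0:ℝ) ≤ s := le_of_lt (lt_of_le_of_lt ht0 hts)
    have hsIcc : s ∈ Set.Icc (0:ℝ) 1 := ⟨hs0, le_trans hss' hs1⟩
    have hs'Icc : s' ∈ Set.Icc (0:ℝ) 1 := ⟨le_trans hs0 hss', hs1⟩
    exact hleast s hsIcc (pred s')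
      (fun x hx => hagree s' hs'Icc ⟨hx.1, le_trans hx.2 hss'⟩)
  -- minimal element of the image of (t,1] under pred
  have hwf : WellFounded r := hr.wf
  have hne : (pred '' Set.Ioc t 1).Nonempty :=
    ⟨pred 1, 1, ⟨ht1, le_refl 1⟩, rfl⟩
  obtain ⟨m, ⟨s₀, hs₀, hms₀⟩, hmin⟩ := hwf.has_min _ hne
  subst hms₀
  refine ⟨s₀, hs₀, ?_, ?_⟩
  · have key : ∀ s ∈ Set.Ioo t s₀, pred s = pred s₀ := by
      intro s hs
      have h1 : ¬ r (pred s₀) (pred s) := mono s s₀ hs.1 (le_of_lt hs.2) hs₀.2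
      have h2 : ¬ r (pred s) (pred s₀) :=
        hmin (pred s) ⟨s, ⟨hs.1, le_trans (le_of_lt hs.2) hs₀.2⟩, rfl⟩
      rcases (show r (pred s) (pred s₀) ∨ pred s = pred s₀ ∨ r (pred s₀) (pred s) from Or.inr (Or.inl (hr.trichotomous (pred s) (pred s₀) h2 h1))) with h | h | h
      · exact absurd h h2
      · exact h
      · exact absurd h h1
    intro s hs s'' hs''
    rw [key s hs, key s'' hs'']
  · intro s hs
    have hsIcc : s ∈ Set.Icc (0:ℝ) 1 :=
      ⟨le_of_lt (lt_of_le_of_lt ht0 hs.1), le_trans (le_of_lt hs.2) hs₀.2⟩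
    refine ⟨hagree s hsIcc, fun x hx => hagree s hsIcc ⟨le_trans ht0 hx.1, hx.2⟩⟩
end

section
/- Let Ω be a set of functions [0,1] → ℝ, ≼ a well-order on Ω, ω^a the ≼-least element agreeing with ω on [0,a], and ω^{a−} the ≼-least element agreeing with ω on [0,a). Define F_ω as the set of t ∈ [0,1] such that either ω^{t'} ≠ ω^t for all t' ∈ (t,1], or ω^{t'} ≠ ω^t for all t' ∈ [0,t). Then F_ω is well-ordered by ≤ (and hence countable and nowhere dense). -/
/-- The failure set `F_ω` of the Ockham prediction system is well-ordered by `≤`. -/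
theorem ockham_F_isWF
    (Ω : Set (ℝ → ℝ)) (r : Ω → Ω → Prop) (hr : IsWellOrder Ω r)
    (ω : Ω) (pred : ℝ → Ω)
    (hagree : ∀ a ∈ Set.Icc (0:ℝ) 1,
      Set.EqOn ((pred a : ℝ → ℝ)) (ω : ℝ → ℝ) (Set.Icc 0 a))
    (hleast : ∀ a ∈ Set.Icc (0:ℝ) 1, ∀ ω' : Ω,
      Set.EqOn (ω' : ℝ → ℝ) (ω : ℝ → ℝ) (Set.Icc 0 a) → ¬ r ω' (pred a)) :
    Set.IsWF {t | t ∈ Set.Icc (0:ℝ) 1 ∧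
      ((∀ t' ∈ Set.Ioc t 1, pred t' ≠ pred t) ∨
       (∀ t' ∈ Set.Ico (0:ℝ) t, pred t' ≠ pred t))} := by
  rw [Set.isWF_iff_no_descending_seq]
  intro f hf hmem
  -- f n ∈ [0,1]
  have hIcc : ∀ n, f n ∈ Set.Icc (0:ℝ) 1 := fun n => (hmem n).1
  set g : ℕ → Ω := fun n => pred (f n) with hg
  -- monotonicity: for n < m, ¬ r (g n) (g m)
  have hmono : ∀ n m : ℕ, n < m → ¬ r (g n) (g m) := by
    intro n m hnm
    apply hleast (f m) (hIcc m)
    intro x hx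
    exact hagree (f n) (hIcc n) ⟨hx.1, hx.2.trans (le_of_lt (hf hnm))⟩
  -- minimal element of the range of g
  obtain ⟨x, ⟨N, hNx⟩, hmin⟩ :=
    hr.toIsWellFounded.wf.has_min (Set.range g) ⟨g 0, Set.mem_range_self 0⟩
  have hconst : ∀ m, N < m → g m = g N := by
    intro m hm
    rcases @trichotomous_of _ r hr.toTrichotomous (g N) (g m) with h | h | h
    · exact absurd h (hmono N m hm)
    · exact h.symm
    · exact absurd h (hNx ▸ hmin (g m) (Set.mem_range_self m))
  rcases (hmem (N+1)).2 with h | h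
  · exact h (f N) ⟨hf (Nat.lt_succ_self N), (hIcc N).2⟩
      (show g N = g (N+1) from (hconst (N+1) (Nat.lt_succ_self N)).symm)
  · exact h (f (N+2)) ⟨(hIcc (N+2)).1, hf (show N+1 < N+2 from Nat.lt_succ_self _)⟩
      (show g (N+2) = g (N+1) from
        (hconst (N+2) (by omega)).trans (hconst (N+1) (Nat.lt_succ_self N)).symm)
end

section
/- With Ω, ≼, ω^s, and F_ω as in the definition of the Ockham prediction failure set, for any t ∈ F_ω with t < 1, if t' is the least element of F_ω strictly greater than t (the successor of t in F_ω), then the function s ↦ ω^s is constant on the open interval (t, t'). -/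
/-- On each successor gap of the failure set `F_ω`, the map `s ↦ ω^s` is constant. -/
theorem ockham_constant_on_F_gaps
    (Ω : Set (ℝ → ℝ)) (r : Ω → Ω → Prop) (hr : IsWellOrder Ω r)
    (ω : Ω) (pred : ℝ → Ω)
    (hagree : ∀ a ∈ Set.Icc (0:ℝ) 1,
      Set.EqOn ((pred a : ℝ → ℝ)) (ω : ℝ → ℝ) (Set.Icc 0 a))
    (hleast : ∀ a ∈ Set.Icc (0:ℝ) 1, ∀ ω' : Ω,
      Set.EqOn (ω' : ℝ → ℝ) (ω : ℝ → ℝ) (Set.Icc 0 a) → ¬ r ω' (pred a))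
    (F : Set ℝ)
    (hF : F = {t | t ∈ Set.Icc (0:ℝ) 1 ∧
      ((∀ t' ∈ Set.Ioc t 1, pred t' ≠ pred t) ∨
       (∀ t' ∈ Set.Ico (0:ℝ) t, pred t' ≠ pred t))})
    (t t' : ℝ) (htF : t ∈ F) (ht1 : t < 1)
    (ht'F : t' ∈ F) (htt' : t < t')
    (hsucc : ∀ s ∈ F, t < s → t' ≤ s) :
    ∀ s ∈ Set.Ioo t t', ∀ s'' ∈ Set.Ioo t t', pred s = pred s'' := by
  rw [hF] at htF ht'F
  have ht0 : (0:ℝ) ≤ t := htF.1.1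
  have ht'1 : t' ≤ 1 := ht'F.1.2
  -- interval lemma
  have key : ∀ a b c : ℝ, 0 ≤ a → c ≤ 1 → a ≤ b → b ≤ c → pred a = pred c →
      pred b = pred a := by
    intro a b c ha hc hab hbc hac
    have ha' : a ∈ Set.Icc (0:ℝ) 1 := ⟨ha, (hab.trans hbc).trans hc⟩
    have hb' : b ∈ Set.Icc (0:ℝ) 1 := ⟨ha.trans hab, hbc.trans hc⟩
    have hc' : c ∈ Set.Icc (0:ℝ) 1 := ⟨ha.trans (hab.trans hbc), hc⟩
    have h1 : ¬ r (pred b) (pred a) :=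
      hleast a ha' (pred b) (fun x hx => hagree b hb' ⟨hx.1, hx.2.trans hab⟩)
    have h2 : ¬ r (pred a) (pred b) := by
      refine hleast b hb' (pred a) (fun x hx => ?_)
      rw [hac]
      exact hagree c hc' ⟨hx.1, hx.2.trans hbc⟩
    exact (hr.trichotomous (pred a) (pred b) h2 h1).symm
  -- non-membership in F for points in the gap
  have hnotF : ∀ m ∈ Set.Ioo t t',
      (∃ u ∈ Set.Ioc m 1, pred u = pred m) ∧
      (∃ v ∈ Set.Ico (0:ℝ) m, pred v = pred m) := by
    intro m hm
    have hm' : m ∉ F := fun h => absurd (hsucc m h hm.1) (not_le.mpr hm.2)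
    rw [hF] at hm'
    have hmIcc : m ∈ Set.Icc (0:ℝ) 1 := ⟨ht0.trans hm.1.le, hm.2.le.trans ht'1⟩
    simp only [Set.mem_setOf_eq, not_and, not_or, not_forall] at hm'
    obtain ⟨h1, h2⟩ := hm' hmIcc
    push_neg at h1 h2
    obtain ⟨u, hu1, hu2⟩ := h1
    obtain ⟨v, hv1, hv2⟩ := h2
    exact ⟨⟨u, hu1, hu2⟩, ⟨v, hv1, hv2⟩⟩
  -- main claim for ordered pairs
  have main : ∀ s ∈ Set.Ioo t t', ∀ s'' ∈ Set.Ioo t t', s ≤ s'' →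
      pred s = pred s'' := by
    intro s hs s'' hs'' hle
    set A := {x : ℝ | x ∈ Set.Icc s s'' ∧ pred x = pred s} with hA
    have hsA : s ∈ A := ⟨⟨le_refl s, hle⟩, rfl⟩
    have hAne : A.Nonempty := ⟨s, hsA⟩
    have hAbdd : BddAbove A := ⟨s'', fun x hx => hx.1.2⟩
    set m := sSup A with hm
    have hsm : s ≤ m := le_csSup hAbdd hsA
    have hms'' : m ≤ s'' := csSup_le hAne (fun x hx => hx.1.2)
    have hs0 : 0 ≤ s := ht0.trans hs.1.le
    have hs''1 : s'' ≤ 1 := hs''.2.le.trans ht'1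
    have hmIoo : m ∈ Set.Ioo t t' :=
      ⟨lt_of_lt_of_le hs.1 hsm, lt_of_le_of_lt hms'' hs''.2⟩
    -- pred is pred s on [s, m)
    have hbelow : ∀ x, s ≤ x → x < m → pred x = pred s := by
      intro x hsx hxm
      obtain ⟨y, hyA, hxy⟩ := exists_lt_of_lt_csSup hAne hxm
      exact key s x y hs0 (hyA.1.2.trans hs''1) hsx hxy.le hyA.2.symm
    -- pred m = pred s
    have hmA : pred m = pred s := by
      by_contra hne
      obtain ⟨-, v, hv, hvm⟩ := hnotF m hmIoo
      rcases le_or_gt s v with hsv | hvs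
      · exact hne ((hbelow v hsv hv.2) ▸ hvm.symm)
      · exact hne ((key v s m hv.1 (hms''.trans hs''1) hvs.le hsm hvm).trans hvm).symm
    have : m = s'' := by
      by_contra hne
      have hm_lt : m < s'' := lt_of_le_of_ne hms'' hne
      obtain ⟨⟨u, hu, hum⟩, -⟩ := hnotF m hmIoo
      set w := min u s'' with hw
      have hmw : m < w := lt_min hu.1 hm_lt
      have hws'' : w ≤ s'' := min_le_right _ _
      have hpw : pred w = pred m :=
        key m w u (hs0.trans hsm) hu.2 hmw.le (min_le_left _ _) hum.symm
      have hwA : w ∈ A := ⟨⟨hsm.trans hmw.le, hws''⟩, hpw.trans hmA⟩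
      exact absurd (le_csSup hAbdd hwA) (not_le.mpr hmw)
    rw [← this, hmA]
  intro s hs s'' hs''
  rcases le_total s s'' with h | h
  · exact main s hs s'' hs'' h
  · exact (main s'' hs'' s hs h).symm
end

section
/- Let W ⊆ [0,1] be any set well-ordered by ≤ and containing 1. Then there exist a well-order ≼ on the set Ω = C[0,1] of continuous real functions on [0,1] and ω ∈ Ω such that W_ω = W, where W_ω := {t ∈ [0,1] : ∀ t' ∈ (t,1], ω^{t'} ≠ ω^t} and ω^a is the ≼-least element of Ω agreeing with ω on [0,a]. -/
open Set

section OckhamAux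

variable (W : Set ℝ)

/-- The truncated identity `t ↦ min t w`. -/
noncomputable def omfunAux (w : ℝ) : {f : ℝ → ℝ // ContinuousOn f (Set.Icc 0 1)} :=
  ⟨fun t => min t w, (continuous_id.min continuous_const).continuousOn⟩

theorem omfunAux_inj {w w' : ℝ} (hw : w ≤ 1) (hw' : w' ≤ 1)
    (h : omfunAux w = omfunAux w') : w = w' := by
  have := congrFun (congrArg Subtype.val h) 1
  simpa [omfunAux, min_eq_right hw, min_eq_right hw'] using this

open Classical in
/-- Map each function to `inl w` if it is `omfunAux w` for some `w ∈ W`, else `inr` of itself. -/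
noncomputable def phiAux (f : {f : ℝ → ℝ // ContinuousOn f (Set.Icc 0 1)}) :
    ↥W ⊕ {f : ℝ → ℝ // ContinuousOn f (Set.Icc 0 1)} :=
  if h : ∃ w : W, f = omfunAux (w : ℝ) then Sum.inl h.choose else Sum.inr f

variable {W}

theorem phiAux_omfun (hW : W ⊆ Set.Icc 0 1) (w : W) :
    phiAux W (omfunAux (w : ℝ)) = Sum.inl w := by
  have hex : ∃ w' : W, omfunAux (w : ℝ) = omfunAux ((w' : W) : ℝ) := ⟨w, rfl⟩
  rw [phiAux, dif_pos hex]
  congr 1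
  exact Subtype.ext (omfunAux_inj (hW hex.choose.2).2 (hW w.2).2 hex.choose_spec.symm)

theorem phiAux_inj (hW : W ⊆ Set.Icc 0 1) : Function.Injective (phiAux W) := by
  intro f g hfg
  unfold phiAux at hfg
  split_ifs at hfg with hf hg hg
  · rw [hf.choose_spec, hg.choose_spec, Sum.inl.inj hfg]
  · exact Sum.inr.inj hfg

/-- The least element of `W` that is `≥ a` (for `a ≤ 1`), else `1`. -/
noncomputable def gWAux (hWF : W.IsWF) (h1 : (1:ℝ) ∈ W) (a : ℝ) : ℝ :=
  if h : a ≤ 1 then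
    (hWF.mono (Set.sep_subset W fun w => a ≤ w)).min ⟨1, h1, h⟩
  else 1

theorem gWAux_mem (hWF : W.IsWF) (h1 : (1:ℝ) ∈ W) (a : ℝ) : gWAux hWF h1 a ∈ W := by
  unfold gWAux
  split_ifs with h
  · exact ((hWF.mono (Set.sep_subset W fun w => a ≤ w)).min_mem ⟨1, h1, h⟩).1
  · exact h1

theorem le_gWAux (hWF : W.IsWF) (h1 : (1:ℝ) ∈ W) {a : ℝ} (ha : a ≤ 1) :
    a ≤ gWAux hWF h1 a := by
  rw [gWAux, dif_pos ha]
  exact ((hWF.mono (Set.sep_subset W fun w => a ≤ w)).min_mem ⟨1, h1, ha⟩).2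

theorem gWAux_min (hWF : W.IsWF) (h1 : (1:ℝ) ∈ W) {a w : ℝ} (ha : a ≤ 1)
    (hw : w ∈ W) (haw : a ≤ w) : gWAux hWF h1 a ≤ w := by
  rw [gWAux, dif_pos ha]
  exact not_lt.mp ((hWF.mono (Set.sep_subset W fun w => a ≤ w)).not_lt_min ⟨1, h1, ha⟩ ⟨hw, haw⟩)

theorem gWAux_self (hWF : W.IsWF) (h1 : (1:ℝ) ∈ W) {a : ℝ} (ha : a ∈ W) (ha1 : a ≤ 1) :
    gWAux hWF h1 a = a :=
  le_antisymm (gWAux_min hWF h1 ha1 ha le_rfl) (le_gWAux hWF h1 ha1)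

end OckhamAux

/-- Any well-ordered `W ⊆ [0,1]` containing `1` arises as `W_ω` for some well-order on `C[0,1]`
and some continuous `ω`. -/
theorem exists_ockham_realizing_W
    (W : Set ℝ) (hW : W ⊆ Set.Icc 0 1) (hWF : W.IsWF) (h1 : (1:ℝ) ∈ W) :
    ∃ (r : {f : ℝ → ℝ // ContinuousOn f (Set.Icc 0 1)} →
           {f : ℝ → ℝ // ContinuousOn f (Set.Icc 0 1)} → Prop),
      IsWellOrder {f : ℝ → ℝ // ContinuousOn f (Set.Icc 0 1)} r ∧
      ∃ (ω : {f : ℝ → ℝ // ContinuousOn f (Set.Icc 0 1)})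
        (pred : ℝ → {f : ℝ → ℝ // ContinuousOn f (Set.Icc 0 1)}),
        (∀ a ∈ Set.Icc (0:ℝ) 1,
          Set.EqOn ((pred a : ℝ → ℝ)) (ω : ℝ → ℝ) (Set.Icc 0 a) ∧
          ∀ ω' : {f : ℝ → ℝ // ContinuousOn f (Set.Icc 0 1)},
            Set.EqOn (ω' : ℝ → ℝ) (ω : ℝ → ℝ) (Set.Icc 0 a) → ¬ r ω' (pred a)) ∧
        {t | t ∈ Set.Icc (0:ℝ) 1 ∧ ∀ t' ∈ Set.Ioc t 1, pred t' ≠ pred t} = W := by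
  classical
  set Om := {f : ℝ → ℝ // ContinuousOn f (Set.Icc 0 1)} with hOm
  -- well order on W by <
  haveI : IsWellFounded ↥W (· < ·) := ⟨hWF⟩
  haveI hWO : IsWellOrder ↥W ((· < ·) : ↥W → ↥W → Prop) :=
    { }
  -- arbitrary well order on Om
  haveI : IsWellOrder Om (WellOrderingRel) := WellOrderingRel.isWellOrder
  set s : ↥W ⊕ Om → ↥W ⊕ Om → Prop :=
    Sum.Lex ((· < ·) : ↥W → ↥W → Prop) (WellOrderingRel) with hs
  haveI hsWO : IsWellOrder _ s := by rw [hs]; infer_instance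
  set r : Om → Om → Prop := fun f g => s (phiAux W f) (phiAux W g) with hr
  have hrWO : IsWellOrder Om r := by
    have emb : r ↪r s := ⟨⟨phiAux W, phiAux_inj hW⟩, Iff.rfl⟩
    exact emb.isWellOrder
  refine ⟨r, hrWO, ⟨id, continuous_id.continuousOn⟩,
    fun a => omfunAux (gWAux hWF h1 a), ?_, ?_⟩
  · rintro a ⟨ha0, ha1⟩
    constructor
    · intro t ⟨ht0, hta⟩
      simp only [omfunAux, id_eq]
      exact min_eq_left (hta.trans (le_gWAux hWF h1 ha1))
    · intro ω' hEq hlt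
      rw [hr] at hlt
      beta_reduce at hlt
      -- phi (omfunAux (gWAux ...)) = inl ⟨gWAux, mem⟩
      have hmem : gWAux hWF h1 a ∈ W := gWAux_mem hWF h1 a
      have key : phiAux W (omfunAux (gWAux hWF h1 a)) = Sum.inl ⟨gWAux hWF h1 a, hmem⟩ :=
        phiAux_omfun hW ⟨_, hmem⟩
      rw [key] at hlt
      -- analyze phi ω'
      rcases h' : phiAux W ω' with w' | f'
      · rw [h', hs] at hlt
        rw [Sum.lex_inl_inl] at hlt
        -- ω' = omfunAux w'
        have hω' : ω' = omfunAux (w' : ℝ) := by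
          unfold phiAux at h'
          split_ifs at h' with hex
          · rw [hex.choose_spec, Sum.inl.inj h']
        have hw'W : (w' : ℝ) ∈ W := w'.2
        have hw'a : (w' : ℝ) < a := by
          by_contra hcon
          exact absurd (gWAux_min hWF h1 ha1 hw'W (not_lt.mp hcon)) (not_le.mpr hlt)
        have := hEq (⟨ha0, le_rfl⟩ : a ∈ Set.Icc 0 a)
        rw [hω'] at this
        simp only [omfunAux, id_eq] at this
        rw [min_eq_right hw'a.le] at this
        exact absurd this (ne_of_lt hw'a)
      · rw [h', hs] at hlt
        exact Sum.lex_inr_inl hlt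
  · ext t
    simp only [Set.mem_setOf_eq]
    constructor
    · rintro ⟨⟨ht0, ht1⟩, hall⟩
      by_contra htW
      set w := gWAux hWF h1 t with hw
      have hwW : w ∈ W := gWAux_mem hWF h1 t
      have htw : t < w := lt_of_le_of_ne (le_gWAux hWF h1 ht1) (fun h => htW (h ▸ hwW))
      have hw1 : w ≤ 1 := (hW hwW).2
      refine hall w ⟨htw, hw1⟩ ?_
      rw [gWAux_self hWF h1 hwW hw1]
    · intro htW
      have ht01 := hW htW
      refine ⟨ht01, fun t' ⟨htt', ht'1⟩ hcon => ?_⟩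
      rw [gWAux_self hWF h1 htW ht01.2] at hcon
      have hgt' : t' ≤ gWAux hWF h1 t' := le_gWAux hWF h1 ht'1
      have hg1 : gWAux hWF h1 t' ≤ 1 := (hW (gWAux_mem hWF h1 t')).2
      have heq : gWAux hWF h1 t' = t := omfunAux_inj hg1 ht01.2 hcon
      exact absurd (heq ▸ hgt' : t' ≤ t) (not_le.mpr htt')
end

section
/- Let Ω = C[0,1], ≼ a well-order on Ω, ω^s the ≼-least continuous function agreeing with ω on [0,s], and W_ω := {t ∈ [0,1] : ∀ t' ∈ (t,1], ω^{t'} ≠ ω^t}. Then for any t ∈ W_ω with t < 1 and t' the successor of t in W_ω, the map s ↦ ω^s is constant on (t, t'). -/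
/-- For `Ω = C[0,1]`, on each successor gap of `W_ω` the map `s ↦ ω^s` is constant. -/
theorem ockham_constant_on_W_gaps_continuous
    (r : {f : ℝ → ℝ // ContinuousOn f (Set.Icc 0 1)} →
         {f : ℝ → ℝ // ContinuousOn f (Set.Icc 0 1)} → Prop)
    (hr : IsWellOrder {f : ℝ → ℝ // ContinuousOn f (Set.Icc 0 1)} r)
    (ω : {f : ℝ → ℝ // ContinuousOn f (Set.Icc 0 1)})
    (pred : ℝ → {f : ℝ → ℝ // ContinuousOn f (Set.Icc 0 1)})
    (hagree : ∀ a ∈ Set.Icc (0:ℝ) 1,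
      Set.EqOn ((pred a : ℝ → ℝ)) (ω : ℝ → ℝ) (Set.Icc 0 a))
    (hleast : ∀ a ∈ Set.Icc (0:ℝ) 1,
      ∀ ω' : {f : ℝ → ℝ // ContinuousOn f (Set.Icc 0 1)},
        Set.EqOn (ω' : ℝ → ℝ) (ω : ℝ → ℝ) (Set.Icc 0 a) → ¬ r ω' (pred a))
    (W : Set ℝ)
    (hWdef : W = {t | t ∈ Set.Icc (0:ℝ) 1 ∧ ∀ t' ∈ Set.Ioc t 1, pred t' ≠ pred t})
    (t t' : ℝ) (htW : t ∈ W) (ht1 : t < 1)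
    (ht'W : t' ∈ W) (htt' : t < t')
    (hsucc : ∀ s ∈ W, t < s → t' ≤ s) :
    ∀ s ∈ Set.Ioo t t', ∀ s'' ∈ Set.Ioo t t', pred s = pred s'' := by
  have ht01 : t ∈ Set.Icc (0:ℝ) 1 := by rw [hWdef] at htW; exact htW.1
  have ht'01 : t' ∈ Set.Icc (0:ℝ) 1 := by rw [hWdef] at ht'W; exact ht'W.1
  have hmemIcc : ∀ v ∈ Set.Ioo t t', v ∈ Set.Icc (0:ℝ) 1 := fun v hv =>
    ⟨le_of_lt (lt_of_le_of_lt ht01.1 hv.1), le_of_lt (lt_of_lt_of_le hv.2 ht'01.2)⟩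
  -- monotonicity: for a ≤ b, pred b is not r-below pred a
  have mono : ∀ a b : ℝ, a ∈ Set.Icc (0:ℝ) 1 → b ∈ Set.Icc (0:ℝ) 1 → a ≤ b →
      ¬ r (pred b) (pred a) := by
    intro a b ha hb hab
    exact hleast a ha (pred b)
      ((hagree b hb).mono (Set.Icc_subset_Icc_right hab))
  have tri : ∀ x y, ¬ r x y → ¬ r y x → x = y := by
    intro x y h1 h2
    rcases @trichotomous _ r hr.toTrichotomous x y with h | h | h
    · exact absurd h h1
    · exact h
    · exact absurd h h2
  -- interval lemma: if pred u = pred a and a ≤ v ≤ u, then pred v = pred a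
  have interval : ∀ a v u : ℝ, a ∈ Set.Icc (0:ℝ) 1 → v ∈ Set.Icc (0:ℝ) 1 →
      u ∈ Set.Icc (0:ℝ) 1 → a ≤ v → v ≤ u → pred u = pred a → pred v = pred a := by
    intro a v u ha hv hu hav hvu huu
    refine (tri (pred a) (pred v) ?_ (mono a v ha hv hav)).symm
    intro hrav
    exact mono v u hv hu hvu (huu ▸ hrav)
  -- points of (t,t') are not in W
  have notW : ∀ v ∈ Set.Ioo t t', ∃ u ∈ Set.Ioc v 1, pred u = pred v := by
    intro v hv
    have hvW : v ∉ W := fun h => absurd (hsucc v h hv.1) (not_le.mpr hv.2)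
    rw [hWdef] at hvW
    simp only [Set.mem_setOf_eq, not_and, not_forall] at hvW
    obtain ⟨u, hu, hne⟩ := hvW (hmemIcc v hv)
    exact ⟨u, hu, not_not.mp hne⟩
  -- main: suffices for s ≤ s''
  have key : ∀ s ∈ Set.Ioo t t', ∀ s'' ∈ Set.Ioo t t', s ≤ s'' → pred s = pred s'' := by
    intro s hs s'' hs'' hle
    set S : Set ℝ := {v | v ∈ Set.Icc s s'' ∧ pred v = pred s} with hS
    have hsS : s ∈ S := ⟨⟨le_refl s, hle⟩, rfl⟩
    have hSne : S.Nonempty := ⟨s, hsS⟩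
    have hSbdd : BddAbove S := ⟨s'', fun v hv => hv.1.2⟩
    set c := sSup S with hc
    have hsc : s ≤ c := le_csSup hSbdd hsS
    have hcs'' : c ≤ s'' := csSup_le hSne (fun v hv => hv.1.2)
    have hc01 : c ∈ Set.Icc (0:ℝ) 1 :=
      ⟨le_trans (hmemIcc s hs).1 hsc, le_trans hcs'' (hmemIcc s'' hs'').2⟩
    have hcpos : 0 < c := lt_of_le_of_lt ht01.1 (lt_of_lt_of_le hs.1 hsc)
    -- pred s agrees with ω on Ico 0 c
    have hIco : Set.EqOn ((pred s : ℝ → ℝ)) (ω : ℝ → ℝ) (Set.Ico 0 c) := by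
      intro x hx
      obtain ⟨v, hvS, hxv⟩ := exists_lt_of_lt_csSup hSne hx.2
      have hv01 : v ∈ Set.Icc (0:ℝ) 1 := ⟨le_trans (hmemIcc s hs).1 hvS.1.1,
        le_trans hvS.1.2 (hmemIcc s'' hs'').2⟩
      have := hagree v hv01 (x := x) ⟨hx.1, le_of_lt hxv⟩
      rw [hvS.2] at this
      exact this
    -- by continuity, also at c
    have hAtc : (pred s : ℝ → ℝ) c = (ω : ℝ → ℝ) c := by
      have hIcoSub : Set.Ico (0:ℝ) c ⊆ Set.Icc (0:ℝ) 1 :=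
        Set.Ico_subset_Icc_self.trans (Set.Icc_subset_Icc_right hc01.2)
      have hf : ContinuousWithinAt ((pred s : ℝ → ℝ)) (Set.Ico 0 c) c :=
        ((pred s).2 c hc01).mono hIcoSub
      have hg : ContinuousWithinAt ((ω : ℝ → ℝ)) (Set.Ico 0 c) c :=
        (ω.2 c hc01).mono hIcoSub
      have hclos : c ∈ closure (Set.Ico (0:ℝ) c) := by
        rw [closure_Ico hcpos.ne]
        exact ⟨le_of_lt hcpos, le_refl c⟩
      have hNB : (nhdsWithin c (Set.Ico (0:ℝ) c)).NeBot :=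
        mem_closure_iff_nhdsWithin_neBot.mp hclos
      have hEv : (pred s : ℝ → ℝ) =ᶠ[nhdsWithin c (Set.Ico (0:ℝ) c)] (ω : ℝ → ℝ) :=
        Filter.eventuallyEq_of_mem self_mem_nhdsWithin hIco
      exact tendsto_nhds_unique (Filter.Tendsto.congr' hEv hf) hg
    have hIcc : Set.EqOn ((pred s : ℝ → ℝ)) (ω : ℝ → ℝ) (Set.Icc 0 c) := by
      intro x hx
      rcases lt_or_eq_of_le hx.2 with h | h
      · exact hIco ⟨hx.1, h⟩
      · rw [h]; exact hAtc
    have hcS : c ∈ S := by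
      refine ⟨⟨hsc, hcs''⟩, ?_⟩
      exact tri (pred c) (pred s) (mono s c (hmemIcc s hs) hc01 hsc)
        (hleast c hc01 (pred s) hIcc)
    -- c must be s''
    rcases lt_or_eq_of_le hcs'' with hlt | heq
    · exfalso
      have hcIoo : c ∈ Set.Ioo t t' := ⟨lt_of_lt_of_le hs.1 hsc, lt_trans hlt hs''.2⟩
      obtain ⟨u, hu, hpu⟩ := notW c hcIoo
      set w := min u s'' with hw
      have hcw : c < w := lt_min hu.1 hlt
      have hws'' : w ≤ s'' := min_le_right _ _
      have hw01 : w ∈ Set.Icc (0:ℝ) 1 :=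
        ⟨le_trans hc01.1 (le_of_lt hcw), le_trans hws'' (hmemIcc s'' hs'').2⟩
      have hu01 : u ∈ Set.Icc (0:ℝ) 1 := ⟨le_trans hc01.1 (le_of_lt hu.1), hu.2⟩
      have hpw : pred w = pred c :=
        interval c w u hc01 hw01 hu01 (le_of_lt hcw) (min_le_left _ _) hpu
      have hwS : w ∈ S := ⟨⟨le_trans hsc (le_of_lt hcw), hws''⟩, hpw.trans hcS.2⟩
      exact absurd (le_csSup hSbdd hwS) (not_le.mpr hcw)
    · rw [← heq]; exact hcS.2.symm
  intro s hs s'' hs''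
  rcases le_total s s'' with h | h
  · exact key s hs s'' hs'' h
  · exact (key s'' hs'' s hs h).symm
end
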